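/- The dominating number 𝔡 is greater than or equal to cov(ℳ), the covering number of the meager ideal of Baire space: 𝔡 ≥ cov(ℳ). -/
import Mathlib

open Cardinal Set Filter

/-- `g` eventually majorizes `f`. -/
def EvMaj (g f : ℕ → ℕ) : Prop := ∀ᶠ n in Filter.atTop, f n < g n

/-- The dominating number 𝔡. -/
noncomputable def domNum : Cardinal :=
  sInf {c : Cardinal | ∃ D : Set (ℕ → ℕ),
    (∀ f : ℕ → ℕ, ∃ g ∈ D, EvMaj g f) ∧ c = #D}

/-- The covering number of the meager ideal of a topological space. -/
noncomputable def covMeager (X : Type) [TopologicalSpace X] : Cardinal :=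
  sInf {c : Cardinal | ∃ F : Set (Set X),
    (∀ s ∈ F, IsMeagre s) ∧ ⋃₀ F = Set.univ ∧ c = #F}

lemma isMeagre_evMaj (g : ℕ → ℕ) : IsMeagre {f : ℕ → ℕ | EvMaj g f} := by
  have hsub : {f : ℕ → ℕ | EvMaj g f} ⊆
      ⋃ N : ℕ, {f : ℕ → ℕ | ∀ n ≥ N, f n < g n} := by
    intro f hf
    rw [Set.mem_iUnion]
    exact Filter.eventually_atTop.mp hf
  refine (isMeagre_iUnion fun N => ?_).mono hsub
  set C : Set (ℕ → ℕ) := {f : ℕ → ℕ | ∀ n ≥ N, f n < g n} with hC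
  have hclosed : IsClosed C := by
    have heq : C = ⋂ n ∈ {n : ℕ | N ≤ n}, (fun f : ℕ → ℕ => f n) ⁻¹' {m | m < g n} := by
      ext f; simp [hC]
    rw [heq]
    exact isClosed_biInter fun n _ =>
      (isClosed_discrete _).preimage (continuous_apply n)
  -- nowhere dense, hence meagre
  have hint : interior C = ∅ := by
    by_contra h
    obtain ⟨x, hx⟩ := Set.nonempty_iff_ne_empty.mpr h
    obtain ⟨I, u, hIu, hpi⟩ := (isOpen_pi_iff.mp isOpen_interior) x hx
    set n : ℕ := max N (I.sup id + 1) with hn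
    have hnI : n ∉ I := by
      intro hmem
      have : id n ≤ I.sup id := Finset.le_sup hmem
      simp only [id] at this
      omega
    set f' : ℕ → ℕ := Function.update x n (g n) with hf'
    have hf'pi : f' ∈ (I : Set ℕ).pi u := by
      intro i hi
      have : f' i = x i := Function.update_of_ne (by rintro rfl; exact hnI hi) _ _
      rw [this]
      exact (hIu i hi).2
    have hf'C : f' ∈ C := interior_subset (hpi hf'pi)
    have : f' n < g n := hf'C n (le_max_left _ _)
    rw [hf', Function.update_self] at this
    omega
  have : IsNowhereDense C := hclosed.isNowhereDense_iff.mpr hint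
  rw [isMeagre_iff_countable_union_isNowhereDense]
  exact ⟨{C}, by simpa using this, Set.countable_singleton _, by simp⟩

theorem covMeager_le_domNum : covMeager (ℕ → ℕ) ≤ domNum := by
  have hne : {c : Cardinal | ∃ D : Set (ℕ → ℕ),
      (∀ f : ℕ → ℕ, ∃ g ∈ D, EvMaj g f) ∧ c = #D}.Nonempty := by
    refine ⟨#(Set.univ : Set (ℕ → ℕ)), Set.univ, fun f => ⟨fun n => f n + 1, trivial, ?_⟩, rfl⟩
    exact Filter.Eventually.of_forall fun n => Nat.lt_succ_self _
  refine le_csInf hne ?_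
  rintro c ⟨D, hD, rfl⟩
  have : covMeager (ℕ → ℕ) ≤ #((fun g => {f : ℕ → ℕ | EvMaj g f}) '' D) := by
    refine csInf_le' ⟨(fun g => {f : ℕ → ℕ | EvMaj g f}) '' D, ?_, ?_, rfl⟩
    · rintro s ⟨g, _, rfl⟩
      exact isMeagre_evMaj g
    · apply Set.eq_univ_of_forall
      intro f
      obtain ⟨g, hgD, hg⟩ := hD f
      exact ⟨{f' | EvMaj g f'}, ⟨g, hgD, rfl⟩, hg⟩
  exact this.trans Cardinal.mk_image_le
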